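/- arXiv:2106.11706 — 3 statements merged into one kernel-verified Lean document; each statement's English description precedes it below -/
import Mathlib

section
/- Dressing lemma: suppose K⁰(z) is a 2×2 matrix (with entries commuting with everything) satisfying R̃₁₂(z/w) K⁰₁(z) R⁽⁰⁾ K⁰₂(w) = K⁰₂(w) R⁽⁰⁾ K⁰₁(z) R̃₂₁(z/w); suppose L(z) satisfies R̃₁₂(z/w) L₁(z) L₂(w) = L₂(w) L₁(z) R̃₁₂(z/w); suppose L⁰ satisfies R̃₂₁(z/w) (L⁰)₁ (L⁰)₂ = (L⁰)₂ (L⁰)₁ R̃₂₁(z/w); and suppose the cross relations (L⁰)₁ R⁽⁰⁾ L₂(w) = L₂(w) R⁽⁰⁾ (L⁰)₁ and L₁(z) R⁽⁰⁾ (L⁰)₂ = (L⁰)₂ R⁽⁰⁾ L₁(z) hold, with entries of K⁰ commuting with entries of L and L⁰. Then K(z) := L(z) K⁰(z) L⁰ satisfies the Freidel–Maillet equation R̃₁₂(z/w) K₁(z) R⁽⁰⁾ K₂(w) = K₂(w) R⁽⁰⁾ K₁(z) R̃₂₁(z/w). -/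
/- STATEMENT 7 (Dressing lemma): if K⁰ satisfies the scalar Freidel–Maillet equation,
   L satisfies the RLL relation, L⁰ satisfies the R̃₂₁-relation, the cross relations hold,
   and the entries of K⁰ are central, then K(z) := L(z) K⁰(z) L⁰ satisfies the
   Freidel–Maillet equation. -/

open Matrix Kronecker

variable {K : Type*} [Field K] {A : Type*} [Ring A] [Algebra K A]

/-- The non-symmetric R-matrix `R̃(z)` over the base field. -/
noncomputable def Rtmat (q z : K) : Matrix (Fin 2 × Fin 2) (Fin 2 × Fin 2) K :=
  fun p r =>
    if p = r then (if p.1 = p.2 then 1 else (z - 1) / (z * q - q⁻¹))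
    else if p = ((0 : Fin 2), (1 : Fin 2)) ∧ r = ((1 : Fin 2), (0 : Fin 2)) then
      z * (q - q⁻¹) / (z * q - q⁻¹)
    else if p = ((1 : Fin 2), (0 : Fin 2)) ∧ r = ((0 : Fin 2), (1 : Fin 2)) then
      (q - q⁻¹) / (z * q - q⁻¹)
    else 0

/-- The flip `P` on `K² ⊗ K²`, over the base field. -/
def Pmat : Matrix (Fin 2 × Fin 2) (Fin 2 × Fin 2) K :=
  fun p r => if p.1 = r.2 ∧ p.2 = r.1 then 1 else 0

/-- `R⁽⁰⁾ = diag(1, q⁻¹, q⁻¹, 1)` over the base field. -/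
noncomputable def R0mat (q : K) : Matrix (Fin 2 × Fin 2) (Fin 2 × Fin 2) K :=
  fun p r => if p = r then (if p.1 = p.2 then 1 else q⁻¹) else 0


section DressingAux
variable {A : Type*} [Ring A]

lemma kron_one_mul' (M N : Matrix (Fin 2) (Fin 2) A) :
    (M * N) ⊗ₖ (1 : Matrix (Fin 2) (Fin 2) A)
      = (M ⊗ₖ (1 : Matrix (Fin 2) (Fin 2) A)) * (N ⊗ₖ (1 : Matrix (Fin 2) (Fin 2) A)) := by
  ext ⟨i, k⟩ ⟨j, l⟩
  simp [Matrix.mul_apply, Matrix.kroneckerMap_apply, Matrix.one_apply,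
    Fintype.sum_prod_type, mul_ite, ite_mul, Finset.sum_ite_eq, Finset.sum_ite_eq']

lemma one_kron_mul' (M N : Matrix (Fin 2) (Fin 2) A) :
    (1 : Matrix (Fin 2) (Fin 2) A) ⊗ₖ (M * N)
      = ((1 : Matrix (Fin 2) (Fin 2) A) ⊗ₖ M) * ((1 : Matrix (Fin 2) (Fin 2) A) ⊗ₖ N) := by
  ext ⟨i, k⟩ ⟨j, l⟩
  simp [Matrix.mul_apply, Matrix.kroneckerMap_apply, Matrix.one_apply,
    Fintype.sum_prod_type, mul_ite, ite_mul, Finset.sum_ite_eq, Finset.sum_ite_eq']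

lemma kron_comm' (M N : Matrix (Fin 2) (Fin 2) A)
    (h : ∀ i j k l, Commute (M i j) (N k l)) :
    (M ⊗ₖ (1 : Matrix (Fin 2) (Fin 2) A)) * ((1 : Matrix (Fin 2) (Fin 2) A) ⊗ₖ N)
      = ((1 : Matrix (Fin 2) (Fin 2) A) ⊗ₖ N) * (M ⊗ₖ (1 : Matrix (Fin 2) (Fin 2) A)) := by
  ext ⟨i, k⟩ ⟨j, l⟩
  simp [Matrix.mul_apply, Matrix.kroneckerMap_apply, Matrix.one_apply,
    Fintype.sum_prod_type, mul_ite, ite_mul, Finset.sum_ite_eq, Finset.sum_ite_eq']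
  exact (h i j k l).eq

end DressingAux

theorem dressing_lemma (q z w : K) (hq : q ≠ 0) (hden : (z / w) * q - q⁻¹ ≠ 0)
    (K0z K0w Lz Lw L0 : Matrix (Fin 2) (Fin 2) A)
    -- entries of K⁰(z) and K⁰(w) are central (commute with everything)
    (hK0zc : ∀ i j : Fin 2, ∀ a : A, Commute (K0z i j) a)
    (hK0wc : ∀ i j : Fin 2, ∀ a : A, Commute (K0w i j) a)
    -- scalar Freidel–Maillet equation for K⁰
    (hK0 : (Rtmat q (z / w)).map (algebraMap K A)
            * (K0z ⊗ₖ (1 : Matrix (Fin 2) (Fin 2) A)) * (R0mat q).map (algebraMap K A)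
            * ((1 : Matrix (Fin 2) (Fin 2) A) ⊗ₖ K0w)
          = ((1 : Matrix (Fin 2) (Fin 2) A) ⊗ₖ K0w) * (R0mat q).map (algebraMap K A)
            * (K0z ⊗ₖ (1 : Matrix (Fin 2) (Fin 2) A))
            * (Pmat * Rtmat q (z / w) * Pmat).map (algebraMap K A))
    -- RLL relation for L
    (hL : (Rtmat q (z / w)).map (algebraMap K A)
            * (Lz ⊗ₖ (1 : Matrix (Fin 2) (Fin 2) A))
            * ((1 : Matrix (Fin 2) (Fin 2) A) ⊗ₖ Lw)
          = ((1 : Matrix (Fin 2) (Fin 2) A) ⊗ₖ Lw)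
            * (Lz ⊗ₖ (1 : Matrix (Fin 2) (Fin 2) A))
            * (Rtmat q (z / w)).map (algebraMap K A))
    -- R̃₂₁-relation for L⁰
    (hL0 : (Pmat * Rtmat q (z / w) * Pmat).map (algebraMap K A)
            * (L0 ⊗ₖ (1 : Matrix (Fin 2) (Fin 2) A))
            * ((1 : Matrix (Fin 2) (Fin 2) A) ⊗ₖ L0)
          = ((1 : Matrix (Fin 2) (Fin 2) A) ⊗ₖ L0)
            * (L0 ⊗ₖ (1 : Matrix (Fin 2) (Fin 2) A))
            * (Pmat * Rtmat q (z / w) * Pmat).map (algebraMap K A))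
    -- cross relations
    (hcross1 : (L0 ⊗ₖ (1 : Matrix (Fin 2) (Fin 2) A)) * (R0mat q).map (algebraMap K A)
            * ((1 : Matrix (Fin 2) (Fin 2) A) ⊗ₖ Lw)
          = ((1 : Matrix (Fin 2) (Fin 2) A) ⊗ₖ Lw) * (R0mat q).map (algebraMap K A)
            * (L0 ⊗ₖ (1 : Matrix (Fin 2) (Fin 2) A)))
    (hcross2 : (Lz ⊗ₖ (1 : Matrix (Fin 2) (Fin 2) A)) * (R0mat q).map (algebraMap K A)
            * ((1 : Matrix (Fin 2) (Fin 2) A) ⊗ₖ L0)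
          = ((1 : Matrix (Fin 2) (Fin 2) A) ⊗ₖ L0) * (R0mat q).map (algebraMap K A)
            * (Lz ⊗ₖ (1 : Matrix (Fin 2) (Fin 2) A))) :
    (Rtmat q (z / w)).map (algebraMap K A)
        * ((Lz * K0z * L0) ⊗ₖ (1 : Matrix (Fin 2) (Fin 2) A))
        * (R0mat q).map (algebraMap K A)
        * ((1 : Matrix (Fin 2) (Fin 2) A) ⊗ₖ (Lw * K0w * L0))
      = ((1 : Matrix (Fin 2) (Fin 2) A) ⊗ₖ (Lw * K0w * L0))
        * (R0mat q).map (algebraMap K A)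
        * ((Lz * K0z * L0) ⊗ₖ (1 : Matrix (Fin 2) (Fin 2) A))
        * (Pmat * Rtmat q (z / w) * Pmat).map (algebraMap K A) := by
  
  rw [kron_one_mul', kron_one_mul', one_kron_mul', one_kron_mul']
  set R := (Rtmat q (z / w)).map (algebraMap K A) with hRdef
  set S := (R0mat q).map (algebraMap K A) with hSdef
  set T := (Pmat * Rtmat q (z / w) * Pmat).map (algebraMap K A) with hTdef
  set a := Lz ⊗ₖ (1 : Matrix (Fin 2) (Fin 2) A) with hadef
  set b := K0z ⊗ₖ (1 : Matrix (Fin 2) (Fin 2) A) with hbdef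
  set c := L0 ⊗ₖ (1 : Matrix (Fin 2) (Fin 2) A) with hcdef
  set d := (1 : Matrix (Fin 2) (Fin 2) A) ⊗ₖ Lw with hddef
  set e := (1 : Matrix (Fin 2) (Fin 2) A) ⊗ₖ K0w with hedef
  set f := (1 : Matrix (Fin 2) (Fin 2) A) ⊗ₖ L0 with hfdef
  have hbd : b * d = d * b := by
    rw [hbdef, hddef]; exact kron_comm' _ _ fun i j k l => hK0zc i j _
  have hbf : b * f = f * b := by
    rw [hbdef, hfdef]; exact kron_comm' _ _ fun i j k l => hK0zc i j _
  have hae : a * e = e * a := by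
    rw [hadef, hedef]; exact kron_comm' _ _ fun i j k l => (hK0wc k l _).symm
  have hce : c * e = e * c := by
    rw [hcdef, hedef]; exact kron_comm' _ _ fun i j k l => (hK0wc k l _).symm
  have hbd' : ∀ t, b * (d * t) = d * (b * t) := fun t => by
    rw [← mul_assoc, hbd, mul_assoc]
  have hbf' : ∀ t, b * (f * t) = f * (b * t) := fun t => by
    rw [← mul_assoc, hbf, mul_assoc]
  have hae' : ∀ t, a * (e * t) = e * (a * t) := fun t => by
    rw [← mul_assoc, hae, mul_assoc]
  have hce' : ∀ t, c * (e * t) = e * (c * t) := fun t => by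
    rw [← mul_assoc, hce, mul_assoc]
  have hL' : ∀ t, R * (a * (d * t)) = d * (a * (R * t)) := fun t => by
    have := congrArg (· * t) hL; simpa [mul_assoc] using this
  have hK0' : ∀ t, R * (b * (S * (e * t))) = e * (S * (b * (T * t))) := fun t => by
    have := congrArg (· * t) hK0; simpa [mul_assoc] using this
  have hc1' : ∀ t, c * (S * (d * t)) = d * (S * (c * t)) := fun t => by
    have := congrArg (· * t) hcross1; simpa [mul_assoc] using this
  have hc2' : ∀ t, a * (S * (f * t)) = f * (S * (a * t)) := fun t => by
    have := congrArg (· * t) hcross2; simpa [mul_assoc] using this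
  have hL0' : T * (c * f) = f * (c * T) := by simpa [mul_assoc] using hL0
  simp only [mul_assoc]
  rw [hc1' (e * f), hbd' _, hce' f, hL' _, hK0' (c * f), hL0', hbf' (c * T),
    hae' _, hc2' (b * (c * T))]
end

section
/- In the Drinfeld–Jimbo presentation U_q^{DJ} of U_q(ŝl₂), the elements y⁺ᵢ := Kᵢ⁻¹ − q(q−q⁻¹)Kᵢ⁻¹Eᵢ (i = 0, 1) satisfy the q-Serre relations (y⁺ᵢ)³ y⁺ⱼ − [3]_q (y⁺ᵢ)² y⁺ⱼ y⁺ᵢ + [3]_q y⁺ᵢ y⁺ⱼ (y⁺ᵢ)² − y⁺ⱼ (y⁺ᵢ)³ = 0 for i ≠ j. -/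
/- STATEMENT 10: in U_q^{DJ}, the elements y⁺ᵢ := Kᵢ⁻¹ − q(q−q⁻¹)Kᵢ⁻¹Eᵢ satisfy the
   q-Serre relations (y⁺ᵢ)³y⁺ⱼ − [3]_q (y⁺ᵢ)²y⁺ⱼy⁺ᵢ + [3]_q y⁺ᵢy⁺ⱼ(y⁺ᵢ)² − y⁺ⱼ(y⁺ᵢ)³ = 0
   for i ≠ j. -/

variable {K : Type*} [Field K] {A : Type*} [Ring A] [Algebra K A]

/-- q-commutator `[x,y]_q = q·xy − q⁻¹·yx`. -/
noncomputable def qBrk (q : K) (x y : A) : A := q • (x * y) - q⁻¹ • (y * x)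

/-- If `u*x = c • (x*u)` and `v` is a two-sided inverse of `u`, then `x*v = c • (v*x)`. -/
lemma aux_comm (u v x : A) (c : K) (h1 : u * v = 1) (h2 : v * u = 1)
    (h : u * x = c • (x * u)) : x * v = c • (v * x) := by
  calc x * v = (v * u) * x * v := by rw [h2, one_mul]
    _ = v * (u * x) * v := by rw [mul_assoc v u x]
    _ = v * (c • (x * u)) * v := by rw [h]
    _ = c • (v * x * (u * v)) := by
        rw [mul_smul_comm, smul_mul_assoc]
        simp [mul_assoc]
    _ = c • (v * x) := by rw [h1, mul_one]

/-- Collapse mixed Laurent monomials `q^a * q⁻¹^b`. -/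
lemma laurent {K : Type*} [Field K] (q : K) (hq : q ≠ 0) (a b : ℕ) :
    q ^ a * q⁻¹ ^ b = if b ≤ a then q ^ (a - b) else q⁻¹ ^ (b - a) := by
  rcases le_or_gt b a with h | h
  · rw [if_pos h]
    calc q ^ a * q⁻¹ ^ b = q ^ (a - b + b) * q⁻¹ ^ b := by rw [Nat.sub_add_cancel h]
      _ = q ^ (a - b) * (q ^ b * q⁻¹ ^ b) := by rw [pow_add, mul_assoc]
      _ = q ^ (a - b) := by rw [← mul_pow, mul_inv_cancel₀ hq, one_pow, mul_one]
  · rw [if_neg (not_le.mpr h)]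
    calc q ^ a * q⁻¹ ^ b = q ^ a * q⁻¹ ^ (a + (b - a)) := by
          rw [Nat.add_sub_cancel' h.le]
      _ = q ^ a * (q⁻¹ ^ a * q⁻¹ ^ (b - a)) := by rw [pow_add]
      _ = (q * q⁻¹) ^ a * q⁻¹ ^ (b - a) := by rw [mul_pow, ← mul_assoc]
      _ = q⁻¹ ^ (b - a) := by rw [mul_inv_cancel₀ hq, one_pow, one_mul]

set_option maxHeartbeats 0 in
theorem equitable_positive_serre
    (q : K) (hq : q ≠ 0) (hq2 : q ^ 2 ≠ 1)
    (E F Kp Km : Fin 2 → A)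
    (hKK : ∀ i j, Kp i * Kp j = Kp j * Kp i)
    (hKinv1 : ∀ i, Kp i * Km i = 1) (hKinv2 : ∀ i, Km i * Kp i = 1)
    (hKE : ∀ i j, Kp i * E j = (if i = j then q ^ 2 else q⁻¹ ^ 2) • (E j * Kp i))
    (hKF : ∀ i j, Kp i * F j = (if i = j then q⁻¹ ^ 2 else q ^ 2) • (F j * Kp i))
    (hEF : ∀ i j, E i * F j - F j * E i
        = if i = j then (q - q⁻¹)⁻¹ • (Kp i - Km i) else 0)
    (hSerreE : ∀ i j, i ≠ j →
        E i * qBrk q⁻¹ (E i) (qBrk q (E i) (E j))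
          - qBrk q⁻¹ (E i) (qBrk q (E i) (E j)) * E i = 0)
    (hSerreF : ∀ i j, i ≠ j →
        F i * qBrk q⁻¹ (F i) (qBrk q (F i) (F j))
          - qBrk q⁻¹ (F i) (qBrk q (F i) (F j)) * F i = 0)
    (y : Fin 2 → A)
    (hy : ∀ i, y i = Km i - (q * (q - q⁻¹)) • (Km i * E i)) :
    ∀ i j, i ≠ j →
      y i ^ 3 * y j - (q ^ 2 + 1 + q⁻¹ ^ 2) • (y i ^ 2 * y j * y i)
        + (q ^ 2 + 1 + q⁻¹ ^ 2) • (y i * y j * y i ^ 2) - y j * y i ^ 3 = 0 := by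
  intro i j hij
  have l1 : ∀ b : ℕ, q * q⁻¹ ^ b = if b ≤ 1 then q ^ (1 - b) else q⁻¹ ^ (b - 1) := by
    intro b; simpa using laurent q hq 1 b
  have l2 : ∀ a : ℕ, q ^ a * q⁻¹ = if 1 ≤ a then q ^ (a - 1) else q⁻¹ ^ (1 - a) := by
    intro a; simpa using laurent q hq a 1
  have l3 : q * q⁻¹ = 1 := mul_inv_cancel₀ hq
  -- commutation rules
  have hek0 : E i * Km i = (q ^ 2) • (Km i * E i) :=
    aux_comm (Kp i) (Km i) (E i) _ (hKinv1 i) (hKinv2 i) (by simpa using hKE i i)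
  have hfk0 : E j * Km i = (q⁻¹ ^ 2) • (Km i * E j) :=
    aux_comm (Kp i) (Km i) (E j) _ (hKinv1 i) (hKinv2 i)
      (by have := hKE i j; rwa [if_neg hij] at this)
  have hel0 : E i * Km j = (q⁻¹ ^ 2) • (Km j * E i) :=
    aux_comm (Kp j) (Km j) (E i) _ (hKinv1 j) (hKinv2 j)
      (by have := hKE j i; rwa [if_neg (Ne.symm hij)] at this)
  have hfl0 : E j * Km j = (q ^ 2) • (Km j * E j) :=
    aux_comm (Kp j) (Km j) (E j) _ (hKinv1 j) (hKinv2 j) (by simpa using hKE j j)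
  have hKmKp : Kp i * Km j = (1 : K) • (Km j * Kp i) :=
    aux_comm (Kp j) (Km j) (Kp i) 1 (hKinv1 j) (hKinv2 j)
      (by rw [one_smul, hKK])
  have hkl0 : Km i * Km j = Km j * Km i := by
    have := aux_comm (Kp i) (Km i) (Km j) (1 : K) (hKinv1 i) (hKinv2 i) hKmKp
    simpa using this.symm
  have hek : ∀ x : A, E i * (Km i * x) = (q ^ 2) • (Km i * (E i * x)) := by
    intro x; rw [← mul_assoc, hek0, smul_mul_assoc, mul_assoc]
  have hfk : ∀ x : A, E j * (Km i * x) = (q⁻¹ ^ 2) • (Km i * (E j * x)) := by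
    intro x; rw [← mul_assoc, hfk0, smul_mul_assoc, mul_assoc]
  have hel : ∀ x : A, E i * (Km j * x) = (q⁻¹ ^ 2) • (Km j * (E i * x)) := by
    intro x; rw [← mul_assoc, hel0, smul_mul_assoc, mul_assoc]
  have hfl : ∀ x : A, E j * (Km j * x) = (q ^ 2) • (Km j * (E j * x)) := by
    intro x; rw [← mul_assoc, hfl0, smul_mul_assoc, mul_assoc]
  have hkl : ∀ x : A, Km i * (Km j * x) = Km j * (Km i * x) := by
    intro x; rw [← mul_assoc, hkl0, mul_assoc]
  -- the Serre relation, multiplied on the left by Km j * Km i ^ 3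
  have h2 : Km j * (Km i * (Km i * (Km i *
      (E i * qBrk q⁻¹ (E i) (qBrk q (E i) (E j))
        - qBrk q⁻¹ (E i) (qBrk q (E i) (E j)) * E i)))) = 0 := by
    rw [hSerreE i j hij]; simp
  have hgoal : y i ^ 3 * y j - (q ^ 2 + 1 + q⁻¹ ^ 2) • (y i ^ 2 * y j * y i)
        + (q ^ 2 + 1 + q⁻¹ ^ 2) • (y i * y j * y i ^ 2) - y j * y i ^ 3
      = ((q * (q - q⁻¹)) ^ 4) • (Km j * (Km i * (Km i * (Km i *
          (E i * qBrk q⁻¹ (E i) (qBrk q (E i) (E j))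
            - qBrk q⁻¹ (E i) (qBrk q (E i) (E j)) * E i))))) := by
    simp only [hy, qBrk, pow_succ, pow_zero, one_mul, inv_inv,
      mul_sub, sub_mul, mul_add, add_mul, smul_sub, smul_add,
      smul_mul_assoc, mul_smul_comm, smul_smul, mul_assoc,
      hek, hfk, hel, hfl, hkl, hek0, hfk0, hel0, hfl0, hkl0]
    match_scalars
    all_goals try ring_nf
    all_goals try simp only [laurent q hq, l1, l2, l3]
    all_goals try norm_num
    all_goals try ring
  rw [hgoal, h2, smul_zero]
end

section
/- There exists an algebra automorphism σ of the algebra 𝒰_q^{T,+} (the alternating central extension, defined by relations (def1)–(def11)) determined by σ(y⁺₋ₖ) = y⁺ₖ₊₁, σ(y⁺ₖ₊₁) = y⁺₋ₖ, σ(z⁺ₖ₊₁) = z̃⁺ₖ₊₁, σ(z̃⁺ₖ₊₁) = z⁺ₖ₊₁ for all k ∈ ℕ, and σ² = id. -/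
/- STATEMENT 13: the alternating central extension 𝒰_q^{T,+} (presented by relations
   (def1)-(def11)) admits an algebra automorphism σ with
   σ(y⁺₋ₖ) = y⁺ₖ₊₁, σ(y⁺ₖ₊₁) = y⁺₋ₖ, σ(z⁺ₖ₊₁) = z̃⁺ₖ₊₁, σ(z̃⁺ₖ₊₁) = z⁺ₖ₊₁, and σ² = id. -/

noncomputable section

/-- The base field ℚ(q). -/
abbrev KK : Type := RatFunc ℚ

/-- The indeterminate q ∈ ℚ(q). -/
def qq : KK := RatFunc.X

/-- ρ̄ = q⁻¹(q²−q⁻²)². -/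
def ρbar : KK := qq⁻¹ * (qq ^ 2 - qq⁻¹ ^ 2) ^ 2

/-- Generators of 𝒰_q^{T,+}: `ym k` is y⁺₋ₖ, `yp k` is y⁺ₖ₊₁, `z k` is z⁺ₖ₊₁,
`zt k` is z̃⁺ₖ₊₁. -/
inductive Gen : Type
  | ym (k : ℕ) | yp (k : ℕ) | z (k : ℕ) | zt (k : ℕ)

namespace UqTplus

abbrev FA : Type := FreeAlgebra KK Gen

def Ym (k : ℕ) : FA := FreeAlgebra.ι KK (Gen.ym k)
def Yp (k : ℕ) : FA := FreeAlgebra.ι KK (Gen.yp k)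
def Z (k : ℕ) : FA := FreeAlgebra.ι KK (Gen.z k)
def Zt (k : ℕ) : FA := FreeAlgebra.ι KK (Gen.zt k)

/-- The defining relations (def1)-(def11) of the alternating central extension. -/
inductive rel : FA → FA → Prop
  -- (def1)
  | r1a (k : ℕ) : rel (Yp 0 * Ym k - Ym k * Yp 0) ((qq + qq⁻¹)⁻¹ • (Z k - Zt k))
  | r1b (k : ℕ) : rel (Yp k * Ym 0 - Ym 0 * Yp k) ((qq + qq⁻¹)⁻¹ • (Z k - Zt k))
  -- (def2)
  | r2a (k : ℕ) : rel (qq • (Yp 0 * Zt k) - qq⁻¹ • (Zt k * Yp 0)) (ρbar • Yp (k + 1))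
  | r2b (k : ℕ) : rel (qq • (Z k * Yp 0) - qq⁻¹ • (Yp 0 * Z k)) (ρbar • Yp (k + 1))
  -- (def3)
  | r3a (k : ℕ) : rel (qq • (Zt k * Ym 0) - qq⁻¹ • (Ym 0 * Zt k)) (ρbar • Ym (k + 1))
  | r3b (k : ℕ) : rel (qq • (Ym 0 * Z k) - qq⁻¹ • (Z k * Ym 0)) (ρbar • Ym (k + 1))
  -- (def4)
  | r4a (k l : ℕ) : rel (Yp k * Yp l) (Yp l * Yp k)
  | r4b (k l : ℕ) : rel (Ym k * Ym l) (Ym l * Ym k)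
  -- (def5)
  | r5 (k l : ℕ) :
      rel ((Yp k * Ym l - Ym l * Yp k) + (Ym k * Yp l - Yp l * Ym k)) 0
  -- (def6)
  | r6 (k l : ℕ) :
      rel ((Yp k * Zt l - Zt l * Yp k) + (Zt k * Yp l - Yp l * Zt k)) 0
  -- (def7)
  | r7 (k l : ℕ) :
      rel ((Yp k * Z l - Z l * Yp k) + (Z k * Yp l - Yp l * Z k)) 0
  -- (def8)
  | r8 (k l : ℕ) :
      rel ((Ym k * Zt l - Zt l * Ym k) + (Zt k * Ym l - Ym l * Zt k)) 0
  -- (def9)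
  | r9 (k l : ℕ) :
      rel ((Ym k * Z l - Z l * Ym k) + (Z k * Ym l - Ym l * Z k)) 0
  -- (def10)
  | r10a (k l : ℕ) : rel (Zt k * Zt l) (Zt l * Zt k)
  | r10b (k l : ℕ) : rel (Z k * Z l) (Z l * Z k)
  -- (def11)
  | r11 (k l : ℕ) :
      rel ((Z k * Zt l - Zt l * Z k) + (Zt k * Z l - Z l * Zt k)) 0

/-- The alternating central extension 𝒰_q^{T,+}. -/
abbrev U : Type := RingQuot rel

/-- The image of a generator in 𝒰_q^{T,+}. -/
def g (x : Gen) : U := RingQuot.mkAlgHom KK rel (FreeAlgebra.ι KK x)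


/-! ### Auxiliary material for the automorphism σ -/

/-- The swap map on generators. -/
def swap : Gen → Gen
  | .ym k => .yp k
  | .yp k => .ym k
  | .z k => .zt k
  | .zt k => .z k

@[simp] lemma swap_swap (x : Gen) : swap (swap x) = x := by cases x <;> rfl

/-- Shorthand for the quotient map. -/
def pr : FA →ₐ[KK] U := RingQuot.mkAlgHom KK rel

lemma relU {a b : FA} (h : rel a b) : pr a = pr b := RingQuot.mkAlgHom_rel KK h

lemma g_eq (x : Gen) : g x = pr (FreeAlgebra.ι KK x) := rfl

/-- The candidate endomorphism, on the free algebra. -/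
def f0 : FA →ₐ[KK] U :=
  FreeAlgebra.lift KK (fun x => pr (FreeAlgebra.ι KK (swap x)))

@[simp] lemma f0_ι (x : Gen) : f0 (FreeAlgebra.ι KK x) = g (swap x) := by
  simp [f0, g_eq]

lemma f0_rel : ∀ ⦃a b : FA⦄, rel a b → f0 a = f0 b := by
  have E : ∀ a b, rel a b → pr a = pr b := fun a b h => relU h
  intro a b h
  induction h with
  | r1a k =>
      have h := E _ _ (rel.r1b k)
      simp only [Ym, Yp, Z, Zt, map_sub, map_add, map_mul, map_smul, ← g_eq] at h ⊢
      simp only [f0_ι, swap]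
      rw [← neg_sub (g (Gen.yp k) * g (Gen.ym 0)) (g (Gen.ym 0) * g (Gen.yp k)), h,
        smul_sub, smul_sub, neg_sub]
  | r1b k =>
      have h := E _ _ (rel.r1a k)
      simp only [Ym, Yp, Z, Zt, map_sub, map_add, map_mul, map_smul, ← g_eq] at h ⊢
      simp only [f0_ι, swap]
      rw [← neg_sub (g (Gen.yp 0) * g (Gen.ym k)) (g (Gen.ym k) * g (Gen.yp 0)), h,
        smul_sub, smul_sub, neg_sub]
  | r2a k =>
      have h := E _ _ (rel.r3b k)
      simp only [Ym, Yp, Z, Zt, map_sub, map_add, map_mul, map_smul, ← g_eq] at h ⊢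
      simpa only [f0_ι, swap] using h
  | r2b k =>
      have h := E _ _ (rel.r3a k)
      simp only [Ym, Yp, Z, Zt, map_sub, map_add, map_mul, map_smul, ← g_eq] at h ⊢
      simpa only [f0_ι, swap] using h
  | r3a k =>
      have h := E _ _ (rel.r2b k)
      simp only [Ym, Yp, Z, Zt, map_sub, map_add, map_mul, map_smul, ← g_eq] at h ⊢
      simpa only [f0_ι, swap] using h
  | r3b k =>
      have h := E _ _ (rel.r2a k)
      simp only [Ym, Yp, Z, Zt, map_sub, map_add, map_mul, map_smul, ← g_eq] at h ⊢
      simpa only [f0_ι, swap] using h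
  | r4a k l =>
      have h := E _ _ (rel.r4b k l)
      simp only [Ym, Yp, Z, Zt, map_sub, map_add, map_mul, map_smul, ← g_eq] at h ⊢
      simpa only [f0_ι, swap] using h
  | r4b k l =>
      have h := E _ _ (rel.r4a k l)
      simp only [Ym, Yp, Z, Zt, map_sub, map_add, map_mul, map_smul, ← g_eq] at h ⊢
      simpa only [f0_ι, swap] using h
  | r5 k l =>
      have h := E _ _ (rel.r5 k l)
      simp only [Ym, Yp, Z, Zt, map_sub, map_add, map_mul, map_smul, map_zero, ← g_eq] at h ⊢
      simp only [f0_ι, swap]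
      rw [add_comm]
      exact h
  | r6 k l =>
      have h := E _ _ (rel.r9 k l)
      simp only [Ym, Yp, Z, Zt, map_sub, map_add, map_mul, map_smul, map_zero, ← g_eq] at h ⊢
      simpa only [f0_ι, swap] using h
  | r7 k l =>
      have h := E _ _ (rel.r8 k l)
      simp only [Ym, Yp, Z, Zt, map_sub, map_add, map_mul, map_smul, map_zero, ← g_eq] at h ⊢
      simpa only [f0_ι, swap] using h
  | r8 k l =>
      have h := E _ _ (rel.r7 k l)
      simp only [Ym, Yp, Z, Zt, map_sub, map_add, map_mul, map_smul, map_zero, ← g_eq] at h ⊢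
      simpa only [f0_ι, swap] using h
  | r9 k l =>
      have h := E _ _ (rel.r6 k l)
      simp only [Ym, Yp, Z, Zt, map_sub, map_add, map_mul, map_smul, map_zero, ← g_eq] at h ⊢
      simpa only [f0_ι, swap] using h
  | r10a k l =>
      have h := E _ _ (rel.r10b k l)
      simp only [Ym, Yp, Z, Zt, map_sub, map_add, map_mul, map_smul, ← g_eq] at h ⊢
      simpa only [f0_ι, swap] using h
  | r10b k l =>
      have h := E _ _ (rel.r10a k l)
      simp only [Ym, Yp, Z, Zt, map_sub, map_add, map_mul, map_smul, ← g_eq] at h ⊢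
      simpa only [f0_ι, swap] using h
  | r11 k l =>
      have h := E _ _ (rel.r11 k l)
      simp only [Ym, Yp, Z, Zt, map_sub, map_add, map_mul, map_smul, map_zero, ← g_eq] at h ⊢
      simp only [f0_ι, swap]
      rw [add_comm]
      exact h

/-- The candidate endomorphism of `U`. -/
def σhom : U →ₐ[KK] U := RingQuot.liftAlgHom KK ⟨f0, f0_rel⟩

@[simp] lemma σhom_g (x : Gen) : σhom (g x) = g (swap x) := by
  show RingQuot.liftAlgHom KK ⟨f0, f0_rel⟩ (RingQuot.mkAlgHom KK rel (FreeAlgebra.ι KK x))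
      = g (swap x)
  rw [RingQuot.liftAlgHom_mkAlgHom_apply, f0_ι]

lemma σhom_invol : σhom.comp σhom = AlgHom.id KK U := by
  apply RingQuot.ringQuot_ext'
  apply FreeAlgebra.hom_ext
  funext x
  show σhom (σhom (g x)) = g x
  rw [σhom_g, σhom_g, swap_swap]

theorem exists_automorphism_sigma :
    ∃ σ : U ≃ₐ[KK] U,
      (∀ k : ℕ, σ (g (Gen.ym k)) = g (Gen.yp k))
      ∧ (∀ k : ℕ, σ (g (Gen.yp k)) = g (Gen.ym k))
      ∧ (∀ k : ℕ, σ (g (Gen.z k)) = g (Gen.zt k))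
      ∧ (∀ k : ℕ, σ (g (Gen.zt k)) = g (Gen.z k))
      ∧ (∀ x : U, σ (σ x) = x) := by
  refine ⟨AlgEquiv.ofAlgHom σhom σhom σhom_invol σhom_invol,
    fun k => ?_, fun k => ?_, fun k => ?_, fun k => ?_, fun x => ?_⟩
  · show σhom (g (Gen.ym k)) = g (Gen.yp k); rw [σhom_g]; rfl
  · show σhom (g (Gen.yp k)) = g (Gen.ym k); rw [σhom_g]; rfl
  · show σhom (g (Gen.z k)) = g (Gen.zt k); rw [σhom_g]; rfl
  · show σhom (g (Gen.zt k)) = g (Gen.z k); rw [σhom_g]; rfl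
  · show σhom (σhom x) = x
    simpa using AlgHom.congr_fun σhom_invol x


end UqTplus
end
end
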